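/- Let T, V, n, q be positive integers. For h ∈ Fin T let W h be an n×n positive definite real matrix; for υ ∈ Fin V let G υ be an n×n real matrix and K̃ υ a q×n real matrix; let U be a q×q symmetric real matrix and ū : Fin q → ℝ with ū e ≥ 0 for all e. Assume that for every h ∈ Fin T and υ ∈ Fin V the matrix 𝔾 h υ = (G υ)ᵀ + G υ − W h is positive definite and the 2×2 block matrix with blocks [−U , K̃ υ ; (K̃ υ)ᵀ , −(𝔾 h υ)] is negative semidefinite, and that U e e ≤ (ū e)² for every e ∈ Fin q. Then for all convex weights θ on Fin T and ϑ on Fin V and every vector x ∈ ℝⁿ with ∑_h θ h · (xᵀ·(W h)⁻¹·x) ≤ 1, the vector u = (∑_υ ϑ υ · (K̃ υ · (G υ)⁻¹))·x satisfies |u e| ≤ ū e for every e ∈ Fin q. -/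

import Mathlib

open Matrix

/-- Input-constraint part of Lemma 2: the LMI (3-21) guarantees the
componentwise hard bound `|uₑ| ≤ ūₑ` for the fuzzy feedback input
`u = (∑ᵥ ϑᵥ K̃ᵥ Gᵥ⁻¹) x` on the ellipsoid `∑ₕ θₕ xᵀ Wₕ⁻¹ x ≤ 1`. -/
theorem stmt_1 (T V n q : ℕ) (hT : 0 < T) (hV : 0 < V) (hn : 0 < n) (hq : 0 < q)
    (W : Fin T → Matrix (Fin n) (Fin n) ℝ) (hW : ∀ h, (W h).PosDef)
    (G : Fin V → Matrix (Fin n) (Fin n) ℝ)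
    (Kt : Fin V → Matrix (Fin q) (Fin n) ℝ)
    (U : Matrix (Fin q) (Fin q) ℝ) (hU : U.IsHermitian)
    (ub : Fin q → ℝ) (hub : ∀ e, 0 ≤ ub e)
    (hGpd : ∀ h υ, ((G υ)ᵀ + G υ - W h).PosDef)
    (hLMI : ∀ h υ,
      (-(Matrix.fromBlocks (-U) (Kt υ) (Kt υ)ᵀ
          (-((G υ)ᵀ + G υ - W h)))).PosSemidef)
    (hUdiag : ∀ e, U e e ≤ (ub e) ^ 2) :
    ∀ (θ : Fin T → ℝ) (ϑ : Fin V → ℝ) (x : Fin n → ℝ),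
      (∀ h, 0 ≤ θ h) → ∑ h, θ h = 1 →
      (∀ υ, 0 ≤ ϑ υ) → ∑ υ, ϑ υ = 1 →
      (∑ h, θ h * (x ⬝ᵥ (W h)⁻¹ *ᵥ x)) ≤ 1 →
      ∀ e, |((∑ υ, ϑ υ • (Kt υ * (G υ)⁻¹)) *ᵥ x) e| ≤ ub e := by
  intro θ ϑ x hθ hθ1 hϑ hϑ1 hball e
  set h₀ : Fin T := ⟨0, hT⟩
  -- G υ is invertible
  have hGdet : ∀ υ, IsUnit (G υ).det := by
    intro υ
    rw [isUnit_iff_ne_zero]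
    intro hd
    obtain ⟨v, hv, hGv⟩ := (Matrix.exists_mulVec_eq_zero_iff).2 hd
    have h1 := (hGpd h₀ υ).dotProduct_mulVec_pos hv
    have h2 := (hW h₀).dotProduct_mulVec_pos hv
    have e1 : v ⬝ᵥ (G υ)ᵀ *ᵥ v = 0 := by
      rw [Matrix.dotProduct_mulVec, Matrix.vecMul_transpose, hGv, zero_dotProduct]
    simp only [star_trivial, Matrix.sub_mulVec, Matrix.add_mulVec, dotProduct_sub,
      dotProduct_add, hGv, dotProduct_zero, e1] at h1 h2
    linarith
  -- component bound for each υ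
  have key : ∀ υ, |((Kt υ * (G υ)⁻¹) *ᵥ x) e| ≤ ub e := by
    intro υ
    set z : Fin n → ℝ := (G υ)⁻¹ *ᵥ x with hz
    have hGz : G υ *ᵥ z = x := by
      rw [hz, Matrix.mulVec_mulVec, Matrix.mul_nonsing_inv _ (hGdet υ), Matrix.one_mulVec]
    set c : ℝ := (Kt υ *ᵥ z) e with hc
    have hcx : ((Kt υ * (G υ)⁻¹) *ᵥ x) e = c := by
      rw [hc, hz, Matrix.mulVec_mulVec]
    set a : Fin q → ℝ := Pi.single e 1 with ha
    -- quadratic form inequality from the LMI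
    have hquad : ∀ h υ' t, 0 ≤ (z ⬝ᵥ ((G υ')ᵀ + G υ' - W h) *ᵥ z) * (t * t)
        + (-(2 * (Kt υ' *ᵥ z) e)) * t + U e e := by
      intro h υ' t
      have := (hLMI h υ').dotProduct_mulVec_nonneg (Sum.elim a (t • z))
      rw [Matrix.fromBlocks_neg] at this
      simp only [neg_neg, star_trivial, Matrix.fromBlocks_mulVec,
        sumElim_dotProduct_sumElim, Sum.elim_comp_inl, Sum.elim_comp_inr,
        Matrix.neg_mulVec, Matrix.mulVec_smul,
        dotProduct_add, dotProduct_neg, dotProduct_smul,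
        smul_dotProduct, smul_eq_mul] at this
      have e1 : a ⬝ᵥ U *ᵥ a = U e e := by
        simp [ha, single_dotProduct, Matrix.mulVec_single]
      have e2 : a ⬝ᵥ Kt υ' *ᵥ z = (Kt υ' *ᵥ z) e := by
        rw [ha, single_dotProduct, one_mul]
      have e3 : z ⬝ᵥ (Kt υ')ᵀ *ᵥ a = (Kt υ' *ᵥ z) e := by
        rw [Matrix.dotProduct_mulVec, Matrix.vecMul_transpose, ha,
          dotProduct_single, mul_one]
      rw [e1, e2, e3] at this
      ring_nf at this ⊢
      linarith
    -- z ⬝ 𝔾 z ≤ x ⬝ W⁻¹ x for every h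
    have hWbound : ∀ h, z ⬝ᵥ ((G υ)ᵀ + G υ - W h) *ᵥ z ≤ x ⬝ᵥ (W h)⁻¹ *ᵥ x := by
      intro h
      have hWinv : (W h)⁻¹.PosDef := (hW h).inv
      have hdet : IsUnit (W h).det := (hW h).det_pos.ne'.isUnit
      set w : Fin n → ℝ := W h *ᵥ z with hw
      have hWiw : (W h)⁻¹ *ᵥ w = z := by
        rw [hw, Matrix.mulVec_mulVec, Matrix.nonsing_inv_mul _ hdet, Matrix.one_mulVec]
      have hpos := hWinv.posSemidef.dotProduct_mulVec_nonneg (x - w)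
      simp only [star_trivial, Matrix.mulVec_sub, dotProduct_sub,
        sub_dotProduct, hWiw] at hpos
      have hsymm : (W h)⁻¹ᵀ = (W h)⁻¹ := by
        have := (hW h).isHermitian.inv
        rw [Matrix.IsHermitian, Matrix.conjTranspose_eq_transpose_of_trivial] at this; exact this
      have e4 : w ⬝ᵥ (W h)⁻¹ *ᵥ x = z ⬝ᵥ x := by
        rw [Matrix.dotProduct_mulVec, ← Matrix.mulVec_transpose, hsymm, hWiw]
      have e5 : w ⬝ᵥ z = z ⬝ᵥ W h *ᵥ z := by
        rw [hw, dotProduct_comm]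
      have e6 : x ⬝ᵥ z = z ⬝ᵥ x := dotProduct_comm _ _
      have e7 : z ⬝ᵥ (G υ)ᵀ *ᵥ z = z ⬝ᵥ x := by
        rw [Matrix.dotProduct_mulVec, Matrix.vecMul_transpose, hGz, dotProduct_comm]
      simp only [Matrix.sub_mulVec, Matrix.add_mulVec, dotProduct_sub,
        dotProduct_add, e7, hGz]
      rw [e4, e5, e6] at hpos
      linarith
    -- discriminant
    have hUee : 0 ≤ U e e := by have := hquad h₀ υ 0; simpa using this
    have hdisc : ∀ h, c ^ 2 ≤ U e e * (x ⬝ᵥ (W h)⁻¹ *ᵥ x) := by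
      intro h
      have hd := discrim_le_zero (hquad h υ)
      rw [discrim] at hd
      have h1 : c ^ 2 ≤ (z ⬝ᵥ ((G υ)ᵀ + G υ - W h) *ᵥ z) * U e e := by nlinarith [hd]
      calc c ^ 2 ≤ (z ⬝ᵥ ((G υ)ᵀ + G υ - W h) *ᵥ z) * U e e := h1
        _ ≤ (x ⬝ᵥ (W h)⁻¹ *ᵥ x) * U e e := by
            nlinarith [hWbound h, hUee, sq_nonneg c]
        _ = U e e * (x ⬝ᵥ (W h)⁻¹ *ᵥ x) := by ring
    -- convex combination over h
    have hcsq : c ^ 2 ≤ U e e := by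
      have h1 : c ^ 2 = ∑ h, θ h * c ^ 2 := by
        rw [← Finset.sum_mul, hθ1, one_mul]
      have h2 : ∑ h, θ h * c ^ 2 ≤ ∑ h, θ h * (U e e * (x ⬝ᵥ (W h)⁻¹ *ᵥ x)) :=
        Finset.sum_le_sum fun h _ => mul_le_mul_of_nonneg_left (hdisc h) (hθ h)
      have h3 : ∑ h, θ h * (U e e * (x ⬝ᵥ (W h)⁻¹ *ᵥ x))
          = U e e * ∑ h, θ h * (x ⬝ᵥ (W h)⁻¹ *ᵥ x) := by
        rw [Finset.mul_sum]; exact Finset.sum_congr rfl fun h _ => by ring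
      have h4 : U e e * ∑ h, θ h * (x ⬝ᵥ (W h)⁻¹ *ᵥ x) ≤ U e e * 1 :=
        mul_le_mul_of_nonneg_left hball hUee
      linarith
    rw [hcx]
    have : c ^ 2 ≤ (ub e) ^ 2 := le_trans hcsq (hUdiag e)
    nlinarith [abs_nonneg c, sq_abs c, hub e]
  -- conclude by convexity over υ
  have hsum : ((∑ υ, ϑ υ • (Kt υ * (G υ)⁻¹)) *ᵥ x) e
      = ∑ υ, ϑ υ * (((Kt υ * (G υ)⁻¹)) *ᵥ x) e := by
    simp only [Matrix.mulVec, dotProduct, Matrix.sum_apply, Matrix.smul_apply,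
      smul_eq_mul, Finset.sum_mul, Finset.mul_sum]
    rw [Finset.sum_comm]
    exact Finset.sum_congr rfl fun _ _ => Finset.sum_congr rfl fun _ _ => by ring
  rw [hsum]
  calc |∑ υ, ϑ υ * (((Kt υ * (G υ)⁻¹)) *ᵥ x) e|
      ≤ ∑ υ, |ϑ υ * (((Kt υ * (G υ)⁻¹)) *ᵥ x) e| := Finset.abs_sum_le_sum_abs _ _
    _ ≤ ∑ υ, ϑ υ * ub e := by
        refine Finset.sum_le_sum fun υ _ => ?_
        rw [abs_mul, abs_of_nonneg (hϑ υ)]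
        exact mul_le_mul_of_nonneg_left (key υ) (hϑ υ)
    _ = ub e := by rw [← Finset.sum_mul, hϑ1, one_mul]
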